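/- Key identity for the monotonicity proof: assume each x_i = (1, z_iᵀ)ᵀ, X has full rank m ≥ 2, w ∈ Ω with M(w) = XᵀΔ_w X positive definite, and w' ∈ Ω is the Algorithm II update of w, i.e. w'_i = w_i·(x_iᵀ M(w)^{-1} x_i − 1)/(m − 1). Let Q = (XᵀΔ_w X)^{-1}XᵀΔ_w, K = (0_{m−1}, I_{m−1}), and ψ'(Σ) = Kᵀ(KΣKᵀ)^{-1}K. Then tr(ψ'(M(w)^{-1}) · Q Δ_{w'}^{-1} Qᵀ) = tr(ψ'(M(w)^{-1}) · Q Δ_w^{-1} Qᵀ). -/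

import Mathlib

open Matrix Filter

/-- The information matrix `M(w) = ∑ i, w_i x_i x_iᵀ`. -/
noncomputable def Mmat {n m : ℕ} (x : Fin n → Fin m → ℝ) (w : Fin n → ℝ) :
    Matrix (Fin m) (Fin m) ℝ :=
  ∑ i, w i • Matrix.vecMulVec (x i) (x i)

/-- The `(m−1) × m` matrix `K = (0_{m−1}, I_{m−1})`: a zero first column followed by the
identity. -/
def Kmat (m : ℕ) : Matrix (Fin (m - 1)) (Fin m) ℝ :=
  Matrix.of fun i j => if (j : ℕ) = (i : ℕ) + 1 then 1 else 0

/-- The gradient `ψ'(Σ) = Kᵀ (K Σ Kᵀ)⁻¹ K` of `ψ(M) = log det (K M Kᵀ)` at `Σ`. -/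
noncomputable def psiK' {m : ℕ} (Sig : Matrix (Fin m) (Fin m) ℝ) :
    Matrix (Fin m) (Fin m) ℝ :=
  (Kmat m)ᵀ * (Kmat m * Sig * (Kmat m)ᵀ)⁻¹ * Kmat m

/- auxiliary lemmas -/

lemma aux_mul_vecMulVec {m k : ℕ} (A : Matrix (Fin k) (Fin m) ℝ) (u : Fin m → ℝ)
    (v : Fin m → ℝ) : A * Matrix.vecMulVec u v = Matrix.vecMulVec (A *ᵥ u) v := by
  ext j l
  simp only [Matrix.mul_apply, Matrix.vecMulVec_apply, Matrix.mulVec, dotProduct,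
    Finset.sum_mul]
  apply Finset.sum_congr rfl
  intro i _; ring

lemma aux_vecMulVec_mul {m k : ℕ} (u : Fin m → ℝ) (v : Fin m → ℝ)
    (A : Matrix (Fin m) (Fin k) ℝ) :
    Matrix.vecMulVec u v * A = Matrix.vecMulVec u (v ᵥ* A) := by
  ext j l
  simp only [Matrix.mul_apply, Matrix.vecMulVec_apply, Matrix.vecMul, dotProduct,
    Finset.mul_sum]
  apply Finset.sum_congr rfl
  intro i _; ring

lemma aux_dot_vecMulVec_mulVec {m : ℕ} (y u v z : Fin m → ℝ) :
    y ⬝ᵥ (Matrix.vecMulVec u v *ᵥ z) = (y ⬝ᵥ u) * (v ⬝ᵥ z) := by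
  simp only [dotProduct, Matrix.mulVec, Matrix.vecMulVec_apply, Finset.sum_mul_sum]
  apply Finset.sum_congr rfl
  intro j _
  rw [Finset.mul_sum]
  apply Finset.sum_congr rfl
  intro k _; ring

lemma aux_Mmat_eq {n m : ℕ} (x : Fin n → Fin m → ℝ) (c : Fin n → ℝ) :
    (Matrix.of x)ᵀ * Matrix.diagonal c * Matrix.of x = Mmat x c := by
  rw [Matrix.mul_assoc]
  ext j k
  rw [Matrix.mul_apply]
  simp only [Matrix.diagonal_mul, Matrix.transpose_apply, Matrix.of_apply,
    Mmat, Matrix.sum_apply, Matrix.smul_apply, Matrix.vecMulVec_apply, smul_eq_mul]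
  apply Finset.sum_congr rfl
  intro i _; ring

lemma aux_trace_vecMulVec_mul {m : ℕ} (u v : Fin m → ℝ) (B : Matrix (Fin m) (Fin m) ℝ) :
    (Matrix.vecMulVec u v * B).trace = v ⬝ᵥ B *ᵥ u := by
  simp only [Matrix.trace, Matrix.diag_apply, Matrix.mul_apply, Matrix.vecMulVec_apply,
    dotProduct, Matrix.mulVec]
  rw [Finset.sum_comm]
  apply Finset.sum_congr rfl
  intro k _
  rw [Finset.mul_sum]
  apply Finset.sum_congr rfl
  intro j _; ring

lemma aux_trace_Mmat_mul {n m : ℕ} (x : Fin n → Fin m → ℝ) (c : Fin n → ℝ)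
    (B : Matrix (Fin m) (Fin m) ℝ) :
    (Mmat x c * B).trace = ∑ i, c i * (x i ⬝ᵥ B *ᵥ x i) := by
  rw [Mmat, Finset.sum_mul, Matrix.trace_sum]
  apply Finset.sum_congr rfl
  intro i _
  rw [Matrix.smul_mul, Matrix.trace_smul, aux_trace_vecMulVec_mul]
  simp [smul_eq_mul]

lemma aux_K_mul_Kt (m : ℕ) : Kmat m * (Kmat m)ᵀ = 1 := by
  ext i i'
  rw [Matrix.mul_apply]
  rw [Finset.sum_eq_single (⟨(i : ℕ) + 1, by have := i.isLt; omega⟩ : Fin m)]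
  · simp [Kmat, Matrix.one_apply, Fin.ext_iff]
  · intro j _ hj
    have hv : (j : ℕ) ≠ (i : ℕ) + 1 := fun h => hj (Fin.ext h)
    simp [Kmat, hv]
  · intro h; exact absurd (Finset.mem_univ _) h

lemma aux_Kt_mul_K {m : ℕ} (i0 : Fin m) (h0 : (i0 : ℕ) = 0) :
    (Kmat m)ᵀ * Kmat m
      = 1 - Matrix.vecMulVec (Pi.single i0 1) (Pi.single i0 1) := by
  ext j k
  rw [Matrix.mul_apply]
  by_cases hj : (j : ℕ) = 0
  · have hji : j = i0 := Fin.ext (by omega)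
    subst hji
    rw [Finset.sum_eq_zero]
    · simp [Matrix.one_apply, Matrix.vecMulVec_apply, Pi.single_apply, eq_comm]
    · intro i _
      have : (j : ℕ) ≠ (i : ℕ) + 1 := by omega
      simp [Kmat, this]
  · have hji : j ≠ i0 := fun h => hj (by rw [h, h0])
    rw [Finset.sum_eq_single (⟨(j : ℕ) - 1, by have := j.isLt; omega⟩ : Fin (m - 1))]
    · have hv : (j : ℕ) = ((j : ℕ) - 1) + 1 := by omega
      simp [Kmat, Matrix.one_apply, Matrix.vecMulVec_apply, Pi.single_apply, hji,
        ← hv, Fin.ext_iff, eq_comm]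
    · intro b _ hb
      have hv : (j : ℕ) ≠ (b : ℕ) + 1 := by
        intro h
        apply hb; apply Fin.ext; simp; omega
      simp [Kmat, hv]
    · intro h; exact absurd (Finset.mem_univ _) h

/-- Key identity for the monotonicity proof: with `Q = (Xᵀ Δ_w X)⁻¹ Xᵀ Δ_w` the weighted
least squares matrix and `w'` the Algorithm II update of `w`,
`tr(ψ'(M(w)⁻¹) Q Δ_{w'}⁻¹ Qᵀ) = tr(ψ'(M(w)⁻¹) Q Δ_w⁻¹ Qᵀ)`. -/
theorem stmt_12 {n m : ℕ} (hm : 2 ≤ m) (hnm : m ≤ n)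
    (x : Fin n → Fin m → ℝ)
    (hx1 : ∀ i, x i ⟨0, by omega⟩ = 1)
    (hrank : (Matrix.of x).rank = m)
    (w : Fin n → ℝ) (hw0 : ∀ i, 0 < w i) (hw1 : ∑ i, w i = 1)
    (hM : (Mmat x w).PosDef)
    (w' : Fin n → ℝ) (hw'0 : ∀ i, 0 < w' i) (hw'1 : ∑ i, w' i = 1)
    (hupd : ∀ i, w' i = w i * ((x i ⬝ᵥ (Mmat x w)⁻¹ *ᵥ x i) - 1) / ((m : ℝ) - 1))
    (Q : Matrix (Fin m) (Fin n) ℝ)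
    (hQ : Q = ((Matrix.of x)ᵀ * Matrix.diagonal w * Matrix.of x)⁻¹ *
      (Matrix.of x)ᵀ * Matrix.diagonal w) :
    (psiK' ((Mmat x w)⁻¹) * (Q * (Matrix.diagonal w')⁻¹ * Qᵀ)).trace =
      (psiK' ((Mmat x w)⁻¹) * (Q * (Matrix.diagonal w)⁻¹ * Qᵀ)).trace := by
  have h0m : 0 < m := by omega
  set M := Mmat x w with hM_def
  set i0 : Fin m := ⟨0, h0m⟩ with hi0_def
  have hx1' : ∀ i, x i i0 = 1 := fun i => hx1 i
  set e : Fin m → ℝ := Pi.single i0 1 with he_def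
  -- basic facts about M
  have hdet : IsUnit M.det := hM.det_pos.ne'.isUnit
  have hMsymm : Mᵀ = M := by
    rw [hM_def, Mmat]
    rw [Matrix.transpose_sum]
    apply Finset.sum_congr rfl
    intro i _
    rw [Matrix.transpose_smul]
    congr 1
    ext j k
    simp [Matrix.vecMulVec_apply, mul_comm]
  have hinvl : M⁻¹ * M = 1 := Matrix.nonsing_inv_mul M hdet
  have hinvr : M * M⁻¹ = 1 := Matrix.mul_nonsing_inv M hdet
  have hMinvT : (M⁻¹)ᵀ = M⁻¹ := by
    rw [Matrix.transpose_nonsing_inv, hMsymm]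
  have hM00 : M i0 i0 = 1 := by
    rw [hM_def, Mmat, ← hw1]
    simp only [Matrix.sum_apply, Matrix.smul_apply, Matrix.vecMulVec_apply, smul_eq_mul]
    apply Finset.sum_congr rfl
    intro i _
    rw [hx1' i]; ring
  -- b = row/column i0 of M
  have hMe : M *ᵥ e = M i0 := by
    rw [he_def, Matrix.mulVec_single_one]
    funext k; exact congrFun (congrFun hMsymm i0) k
  have hMib : M⁻¹ *ᵥ M i0 = e := by
    rw [← hMe, Matrix.mulVec_mulVec, hinvl, Matrix.one_mulVec]
  have hbMi : M i0 ᵥ* M⁻¹ = e := by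
    have h1 : e ᵥ* M = M i0 := by rw [he_def, Matrix.single_one_vecMul]; rfl
    rw [← h1, Matrix.vecMul_vecMul, hinvr, Matrix.vecMul_one]
  -- N = M - b bᵀ is the gradient matrix
  set N : Matrix (Fin m) (Fin m) ℝ := M - Matrix.vecMulVec (M i0) (M i0) with hN_def
  have hNsymm : Nᵀ = N := by
    rw [hN_def, Matrix.transpose_sub, hMsymm]
    congr 1
    ext j k
    simp [Matrix.vecMulVec_apply, mul_comm]
  have hNrow : N i0 = 0 := by
    funext k
    simp only [hN_def, Matrix.sub_apply, Matrix.vecMulVec_apply, Pi.zero_apply]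
    rw [hM00]
    ring
  have hNe : N *ᵥ e = 0 := by
    rw [he_def, Matrix.mulVec_single_one]
    funext k; exact (congrFun (congrFun hNsymm i0) k).trans (congrFun hNrow k)
  have heN : e ᵥ* N = 0 := by
    rw [he_def, Matrix.single_one_vecMul]; exact hNrow
  -- M⁻¹ * N
  have hMiN : M⁻¹ * N = 1 - Matrix.vecMulVec e (M i0) := by
    rw [hN_def, Matrix.mul_sub, hinvl, aux_mul_vecMulVec, hMib]
  have hMiNMi : M⁻¹ * N * M⁻¹ = M⁻¹ - Matrix.vecMulVec e e := by
    rw [hMiN, Matrix.sub_mul, Matrix.one_mul, aux_vecMulVec_mul, hbMi]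
  -- K facts
  have hKe : Kmat m *ᵥ e = 0 := by
    funext i
    rw [he_def]
    simp only [Matrix.mulVec_single, mul_one]
    have : (i0 : ℕ) ≠ (i : ℕ) + 1 := by simp [hi0_def]
    simp [Kmat, this]
  have hKMN : Kmat m * (M⁻¹ * N) = Kmat m := by
    rw [hMiN, Matrix.mul_sub, Matrix.mul_one, aux_mul_vecMulVec, hKe]
    have : Matrix.vecMulVec (0 : Fin (m - 1) → ℝ) (M i0) = 0 := by
      ext j k; simp [Matrix.vecMulVec_apply]
    rw [this, sub_zero]
  have hKtK : (Kmat m)ᵀ * Kmat m = 1 - Matrix.vecMulVec e e :=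
    aux_Kt_mul_K i0 rfl
  have hPN : (Kmat m)ᵀ * Kmat m * N = N := by
    rw [hKtK, Matrix.sub_mul, Matrix.one_mul, aux_vecMulVec_mul, heN]
    have : Matrix.vecMulVec e (0 : Fin m → ℝ) = 0 := by
      ext j k; simp [Matrix.vecMulVec_apply]
    rw [this, sub_zero]
  have hNP : N * ((Kmat m)ᵀ * Kmat m) = N := by
    rw [hKtK, Matrix.mul_sub, Matrix.mul_one, aux_mul_vecMulVec, hNe]
    have : Matrix.vecMulVec (0 : Fin m → ℝ) e = 0 := by
      ext j k; simp [Matrix.vecMulVec_apply]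
    rw [this, sub_zero]
  -- inverse of K M⁻¹ Kᵀ
  have hSinv : (Kmat m * M⁻¹ * (Kmat m)ᵀ)⁻¹ = Kmat m * N * (Kmat m)ᵀ := by
    apply Matrix.inv_eq_right_inv
    have h2 : (Kmat m)ᵀ * (Kmat m * (N * (Kmat m)ᵀ)) = N * (Kmat m)ᵀ := by
      rw [← Matrix.mul_assoc, ← Matrix.mul_assoc, hPN]
    calc Kmat m * M⁻¹ * (Kmat m)ᵀ * (Kmat m * N * (Kmat m)ᵀ)
        = Kmat m * (M⁻¹ * ((Kmat m)ᵀ * (Kmat m * (N * (Kmat m)ᵀ)))) := by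
          simp only [Matrix.mul_assoc]
      _ = Kmat m * (M⁻¹ * (N * (Kmat m)ᵀ)) := by rw [h2]
      _ = Kmat m * (M⁻¹ * N) * (Kmat m)ᵀ := by simp only [Matrix.mul_assoc]
      _ = Kmat m * (Kmat m)ᵀ := by rw [hKMN]
      _ = 1 := aux_K_mul_Kt m
  have hA : psiK' (M⁻¹) = N := by
    rw [psiK', hSinv]
    calc (Kmat m)ᵀ * (Kmat m * N * (Kmat m)ᵀ) * Kmat m
        = (Kmat m)ᵀ * Kmat m * N * ((Kmat m)ᵀ * Kmat m) := by
          simp only [Matrix.mul_assoc]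
      _ = N := by rw [hPN, hNP]
  -- diagonal inverses
  have hdiaginv : ∀ u : Fin n → ℝ, (∀ i, u i ≠ 0) →
      (Matrix.diagonal u)⁻¹ = Matrix.diagonal (fun i => (u i)⁻¹) := by
    intro u hu
    apply Matrix.inv_eq_right_inv
    rw [Matrix.diagonal_mul_diagonal,
      show (fun i => u i * (u i)⁻¹) = fun _ => (1 : ℝ) from
        funext fun i => mul_inv_cancel₀ (hu i)]
    exact Matrix.diagonal_one
  -- rewrite Q
  have hQ' : Q = M⁻¹ * (Matrix.of x)ᵀ * Matrix.diagonal w := by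
    rw [hQ, aux_Mmat_eq, ← hM_def]
  have hQE : ∀ u : Fin n → ℝ, (∀ i, u i ≠ 0) →
      Q * (Matrix.diagonal u)⁻¹ * Qᵀ
        = M⁻¹ * Mmat x (fun i => w i * (u i)⁻¹ * w i) * M⁻¹ := by
    intro u hu
    have hQt : Qᵀ = Matrix.diagonal w * (Matrix.of x * M⁻¹) := by
      rw [hQ']
      rw [Matrix.transpose_mul, Matrix.transpose_mul, Matrix.diagonal_transpose,
        Matrix.transpose_transpose, hMinvT]
    rw [hQt, hQ', hdiaginv u hu]
    rw [← aux_Mmat_eq x (fun i => w i * (u i)⁻¹ * w i)]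
    have hc : Matrix.diagonal w * Matrix.diagonal (fun i => (u i)⁻¹) * Matrix.diagonal w
        = Matrix.diagonal (fun i => w i * (u i)⁻¹ * w i) := by
      rw [Matrix.diagonal_mul_diagonal, Matrix.diagonal_mul_diagonal]
    rw [← hc]
    simp only [Matrix.mul_assoc]
  -- the per-point quadratic form
  have hscal : ∀ i, x i ⬝ᵥ (M⁻¹ * N * M⁻¹) *ᵥ x i
      = (x i ⬝ᵥ M⁻¹ *ᵥ x i) - 1 := by
    intro i
    rw [hMiNMi, Matrix.sub_mulVec, dotProduct_sub]
    congr 1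
    rw [aux_dot_vecMulVec_mulVec]
    rw [he_def]
    simp [hx1' i]
  -- trace formula
  have htr : ∀ c : Fin n → ℝ, (N * (M⁻¹ * Mmat x c * M⁻¹)).trace
      = ∑ i, c i * ((x i ⬝ᵥ M⁻¹ *ᵥ x i) - 1) := by
    intro c
    have h1 : N * (M⁻¹ * Mmat x c * M⁻¹) = (N * M⁻¹) * (Mmat x c * M⁻¹) := by
      simp only [Matrix.mul_assoc]
    have h2 : (Mmat x c * M⁻¹) * (N * M⁻¹) = Mmat x c * (M⁻¹ * N * M⁻¹) := by
      simp only [Matrix.mul_assoc]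
    rw [h1, Matrix.trace_mul_comm, h2, aux_trace_Mmat_mul]
    apply Finset.sum_congr rfl
    intro i _
    rw [hscal i]
  -- positivity of d i - 1
  have hm1 : (0 : ℝ) < (m : ℝ) - 1 := by
    have : (2 : ℝ) ≤ (m : ℝ) := by exact_mod_cast hm
    linarith
  have hd1 : ∀ i, 0 < (x i ⬝ᵥ M⁻¹ *ᵥ x i) - 1 := by
    intro i
    have h := hw'0 i
    rw [hupd i, div_eq_mul_inv] at h
    have hwm : 0 < w i * ((m : ℝ) - 1)⁻¹ := mul_pos (hw0 i) (inv_pos.2 hm1)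
    have heq : w i * ((x i ⬝ᵥ M⁻¹ *ᵥ x i) - 1) * ((m : ℝ) - 1)⁻¹
        = (w i * ((m : ℝ) - 1)⁻¹) * ((x i ⬝ᵥ M⁻¹ *ᵥ x i) - 1) := by ring
    rw [heq] at h
    rcases mul_pos_iff.mp h with ⟨_, h2⟩ | ⟨h1, _⟩
    · exact h2
    · linarith
  -- sum of w i * d i
  have hsum_d : ∑ i, w i * (x i ⬝ᵥ M⁻¹ *ᵥ x i) = (m : ℝ) := by
    rw [← aux_trace_Mmat_mul x w M⁻¹, ← hM_def, hinvr, Matrix.trace_one]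
    simp
  -- evaluate both sides
  rw [hA, hQE w' (fun i => (hw'0 i).ne'), hQE w (fun i => (hw0 i).ne'), htr, htr]
  have hL : ∑ i, (w i * (w' i)⁻¹ * w i) * ((x i ⬝ᵥ M⁻¹ *ᵥ x i) - 1) = (m : ℝ) - 1 := by
    have hterm : ∀ i ∈ Finset.univ, (w i * (w' i)⁻¹ * w i) * ((x i ⬝ᵥ M⁻¹ *ᵥ x i) - 1)
        = ((m : ℝ) - 1) * w i := by
      intro i _
      rw [hupd i]
      have h1 : w i ≠ 0 := (hw0 i).ne'
      have h3 : (m : ℝ) - 1 ≠ 0 := hm1.ne'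
      have h2 := (hd1 i).ne'
      revert h2
      generalize (x i ⬝ᵥ M⁻¹ *ᵥ x i) = D
      intro h2
      field_simp
    rw [Finset.sum_congr rfl hterm, ← Finset.mul_sum, hw1, mul_one]
  have hR : ∑ i, (w i * (w i)⁻¹ * w i) * ((x i ⬝ᵥ M⁻¹ *ᵥ x i) - 1) = (m : ℝ) - 1 := by
    have hterm : ∀ i ∈ Finset.univ, (w i * (w i)⁻¹ * w i) * ((x i ⬝ᵥ M⁻¹ *ᵥ x i) - 1)
        = w i * (x i ⬝ᵥ M⁻¹ *ᵥ x i) - w i := by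
      intro i _
      rw [mul_inv_cancel₀ (hw0 i).ne', one_mul]
      ring
    rw [Finset.sum_congr rfl hterm, Finset.sum_sub_distrib, hsum_d, hw1]
  rw [hL, hR]
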